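/- Let E be a Hilbert space and T ∈ B(F²(Hₙ) ⊗ E) a strictly positive multi-Toeplitz operator. Define ψ : E → F²(Hₙ) ⊗ E by ψ h := T^{-1}(1 ⊗ h) and let N := (P_E T^{-1}|_E)^{1/2}. Then the associated multi-analytic operator M_ψ (defined on polynomials by M_ψ(e_ω ⊗ h) := (S_ω ⊗ I_E) ψh) extends to a bounded invertible multi-analytic operator on F²(Hₙ) ⊗ E, N is invertible, and T = (M_ψ^{-1})* (I ⊗ N²) M_ψ^{-1}; thus Θ := (I ⊗ N) M_ψ^{-1} is a square outer spectral factor of T, i.e., T = Θ*Θ with Θ multi-analytic and outer. -/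

import Mathlib

open scoped InnerProductSpace

set_option maxHeartbeats 1000000
set_option synthInstance.maxHeartbeats 400000

namespace S9

variable {H : Type*} [NormedAddCommGroup H] [InnerProductSpace ℂ H]

lemma mem_orth_span {s : Set H} {x : H} (h : ∀ u ∈ s, ⟪u, x⟫_ℂ = 0) :
    x ∈ (Submodule.span ℂ s)ᗮ := by
  rw [Submodule.mem_orthogonal]
  intro u hu
  induction hu using Submodule.span_induction with
  | mem u hu => exact h u hu
  | zero => simp
  | add u v _ _ hu hv => simp [inner_add_left, hu, hv]
  | smul c u _ hu => simp [inner_smul_left, hu]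

lemma eq_zero_of_dense_span [CompleteSpace H] {s : Set H}
    (hs : (Submodule.span ℂ s).topologicalClosure = ⊤) {x : H}
    (h : ∀ u ∈ s, ⟪u, x⟫_ℂ = 0) : x = 0 := by
  have hx := mem_orth_span h
  rw [Submodule.topologicalClosure_eq_top_iff] at hs
  rw [hs] at hx
  simpa using hx

lemma eq_of_dense_span [CompleteSpace H] {s : Set H}
    (hs : (Submodule.span ℂ s).topologicalClosure = ⊤) {a b : H}
    (h : ∀ u ∈ s, ⟪u, a⟫_ℂ = ⟪u, b⟫_ℂ) : a = b := by
  have h0 : a - b = 0 :=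
    eq_zero_of_dense_span hs (fun u hu => by rw [inner_sub_right, h u hu, sub_self])
  exact sub_eq_zero.mp h0

lemma dense_span [CompleteSpace H] {s : Set H}
    (hs : (Submodule.span ℂ s).topologicalClosure = ⊤) :
    Dense ((Submodule.span ℂ s : Submodule ℂ H) : Set H) := by
  rw [dense_iff_closure_eq, ← Submodule.topologicalClosure_coe, hs]
  rfl

lemma norm_sum_sq {ι : Type*} (s : Finset ι) (u : ι → H)
    (horth : ∀ w ∈ s, ∀ v ∈ s, w ≠ v → ⟪u w, u v⟫_ℂ = 0) :
    ‖∑ w ∈ s, u w‖ ^ 2 = ∑ w ∈ s, ‖u w‖ ^ 2 := by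
  have h1 : RCLike.re ⟪∑ w ∈ s, u w, ∑ w ∈ s, u w⟫_ℂ
      = ∑ w ∈ s, RCLike.re ⟪u w, u w⟫_ℂ := by
    rw [sum_inner, map_sum]
    refine Finset.sum_congr rfl fun w hw => ?_
    rw [inner_sum, Finset.sum_eq_single_of_mem w hw
      (fun v hv hvw => horth w hw v hv (fun h => hvw h.symm))]
  calc ‖∑ w ∈ s, u w‖ ^ 2 = RCLike.re ⟪∑ w ∈ s, u w, ∑ w ∈ s, u w⟫_ℂ :=
        (inner_self_eq_norm_sq _).symm
    _ = ∑ w ∈ s, RCLike.re ⟪u w, u w⟫_ℂ := h1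
    _ = ∑ w ∈ s, ‖u w‖ ^ 2 :=
        Finset.sum_congr rfl fun w _ => inner_self_eq_norm_sq _

lemma bessel {ι : Type*} (P : H →L[ℂ] H) [CompleteSpace H]
    (hsa : ContinuousLinearMap.adjoint P = P)
    (hpos : ∀ z : H, 0 ≤ RCLike.re ⟪P z, z⟫_ℂ)
    (s : Finset ι) (y : ι → H) (x : H)
    (horth : ∀ w ∈ s, ∀ v ∈ s, w ≠ v → ⟪P (y w), y v⟫_ℂ = 0)
    (hcoef : ∀ w ∈ s, ⟪P (y w), x⟫_ℂ = ⟪P (y w), y w⟫_ℂ) :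
    ∑ w ∈ s, RCLike.re ⟪P (y w), y w⟫_ℂ ≤ RCLike.re ⟪P x, x⟫_ℂ := by
  set Y := ∑ w ∈ s, y w with hY
  have hPYx : ⟪P Y, x⟫_ℂ = ∑ w ∈ s, ⟪P (y w), y w⟫_ℂ := by
    rw [hY, map_sum, sum_inner]
    exact Finset.sum_congr rfl fun w hw => hcoef w hw
  have hPYY : ⟪P Y, Y⟫_ℂ = ∑ w ∈ s, ⟪P (y w), y w⟫_ℂ := by
    rw [hY, map_sum, sum_inner]
    refine Finset.sum_congr rfl fun w hw => ?_
    rw [inner_sum, Finset.sum_eq_single_of_mem w hw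
      (fun v hv hvw => horth w hw v hv (fun h => hvw h.symm))]
  have hxY : ⟪P x, Y⟫_ℂ = (starRingEnd ℂ) ⟪P Y, x⟫_ℂ := by
    rw [← inner_conj_symm, ← ContinuousLinearMap.adjoint_inner_left P x Y, hsa]
  have h0 := hpos (x - Y)
  have hexp : ⟪P (x - Y), x - Y⟫_ℂ
      = ⟪P x, x⟫_ℂ - ⟪P x, Y⟫_ℂ - ⟪P Y, x⟫_ℂ + ⟪P Y, Y⟫_ℂ := by
    rw [map_sub, inner_sub_left, inner_sub_right, inner_sub_right]
    ring
  rw [hexp] at h0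
  simp only [map_sub, map_add] at h0
  rw [hxY, RCLike.conj_re, hPYx, hPYY, map_sum] at h0
  linarith

lemma gen_op {ι E F : Type*} [NormedAddCommGroup E] [InnerProductSpace ℂ E]
    [NormedAddCommGroup F] [InnerProductSpace ℂ F] [CompleteSpace F]
    (f : ι → E →L[ℂ] F) (K : ι → F →L[ℂ] E) {Cf CK : ℝ} (hCf : 0 ≤ Cf) (hCK : 0 ≤ CK)
    (hGram : ∀ (s : Finset ι) (a : ι → E),
      ‖∑ w ∈ s, f w (a w)‖ ^ 2 ≤ Cf * ∑ w ∈ s, ‖a w‖ ^ 2)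
    (hBes : ∀ (s : Finset ι) (x : F), ∑ w ∈ s, ‖K w x‖ ^ 2 ≤ CK * ‖x‖ ^ 2) :
    ∃ L : F →L[ℂ] F, ∀ x : F, HasSum (fun w => f w (K w x)) (L x) := by
  have hsum : ∀ x : F, Summable fun w => f w (K w x) := by
    intro x
    rw [summable_iff_vanishing_norm]
    intro ε hε
    have hS : Summable fun w => ‖K w x‖ ^ 2 :=
      summable_of_sum_le (fun w => sq_nonneg _) (fun s => hBes s x)
    have hδ : (0:ℝ) < ε ^ 2 / (Cf + 1) := by positivity
    obtain ⟨s₀, hs₀⟩ := summable_iff_vanishing_norm.mp hS (ε ^ 2 / (Cf + 1)) hδ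
    refine ⟨s₀, fun t ht => ?_⟩
    have h2 := hs₀ t ht
    rw [Real.norm_eq_abs] at h2
    have h3 : ∑ w ∈ t, ‖K w x‖ ^ 2 < ε ^ 2 / (Cf + 1) :=
      lt_of_le_of_lt (le_abs_self _) h2
    have h4 : ‖∑ w ∈ t, f w (K w x)‖ ^ 2 < ε ^ 2 := by
      have h5 := hGram t (fun w => K w x)
      have h6 : Cf * ∑ w ∈ t, ‖K w x‖ ^ 2 < ε ^ 2 := by
        have h7 : Cf * ∑ w ∈ t, ‖K w x‖ ^ 2 ≤ Cf * (ε ^ 2 / (Cf + 1)) :=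
          mul_le_mul_of_nonneg_left h3.le hCf
        have h8 : Cf * (ε ^ 2 / (Cf + 1)) < ε ^ 2 := by
          rw [div_eq_inv_mul, ← mul_assoc]
          have h9 : Cf * (Cf + 1)⁻¹ < 1 := by
            rw [mul_inv_lt_iff₀ (by linarith), one_mul]; linarith
          have h10 := mul_lt_mul_of_pos_right h9 (pow_pos hε 2)
          simpa using h10
        linarith
      linarith
    exact lt_of_pow_lt_pow_left₀ 2 hε.le h4
  have hbound : ∀ x : F, ‖∑' w, f w (K w x)‖ ≤ Real.sqrt (Cf * CK) * ‖x‖ := by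
    intro x
    refine le_of_tendsto' ((hsum x).hasSum.norm) ?_
    intro s
    have h1 : ‖∑ w ∈ s, f w (K w x)‖ ^ 2 ≤ Cf * CK * ‖x‖ ^ 2 := by
      calc ‖∑ w ∈ s, f w (K w x)‖ ^ 2 ≤ Cf * ∑ w ∈ s, ‖K w x‖ ^ 2 :=
            hGram s (fun w => K w x)
        _ ≤ Cf * (CK * ‖x‖ ^ 2) := mul_le_mul_of_nonneg_left (hBes s x) hCf
        _ = Cf * CK * ‖x‖ ^ 2 := by ring
    calc ‖∑ w ∈ s, f w (K w x)‖
        = Real.sqrt (‖∑ w ∈ s, f w (K w x)‖ ^ 2) := (Real.sqrt_sq (norm_nonneg _)).symm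
      _ ≤ Real.sqrt (Cf * CK * ‖x‖ ^ 2) := Real.sqrt_le_sqrt h1
      _ = Real.sqrt (Cf * CK) * ‖x‖ := by
          rw [Real.sqrt_mul (mul_nonneg hCf hCK), Real.sqrt_sq (norm_nonneg _)]
  refine ⟨LinearMap.mkContinuous
    { toFun := fun x => ∑' w, f w (K w x)
      map_add' := fun x y => by
        have h1 : (fun w => f w (K w (x + y)))
            = fun w => f w (K w x) + f w (K w y) := by
          funext w; simp [map_add]
        show (∑' w, f w (K w (x + y))) = _
        rw [h1, Summable.tsum_add (hsum x) (hsum y)]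
      map_smul' := fun c x => by
        have h1 : (fun w => f w (K w (c • x))) = fun w => c • f w (K w x) := by
          funext w; simp [map_smul]
        show (∑' w, f w (K w (c • x))) = _
        rw [h1, ((hsum x).hasSum.const_smul c).tsum_eq, RingHom.id_apply] }
    (Real.sqrt (Cf * CK)) hbound, fun x => (hsum x).hasSum⟩


lemma step_mem [CompleteSpace H] {A B : Submodule ℂ H} (hBc : IsClosed (B : Set H)) {u : H}
    (horth : ∀ a ∈ A, ∀ b ∈ B, ⟪a, b⟫_ℂ = 0)
    (hu : u ∈ closure ((A ⊔ B : Submodule ℂ H) : Set H))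
    (huA : ∀ a ∈ A, ⟪a, u⟫_ℂ = 0) : u ∈ B := by
  haveI : CompleteSpace B := hBc.completeSpace_coe
  set v := u - (Submodule.orthogonalProjectionOnto B u : H) with hv
  have hvB : ∀ b ∈ B, ⟪v, b⟫_ℂ = 0 := fun b hb =>
    Submodule.starProjection_inner_eq_zero (K := B) u b hb
  have hPB : ((Submodule.orthogonalProjectionOnto B u : H)) ∈ B := (Submodule.orthogonalProjectionOnto B u).2
  have hvu : ⟪v, u⟫_ℂ = 0 := by
    have hsub : ((A ⊔ B : Submodule ℂ H) : Set H) ⊆ {y | ⟪v, y⟫_ℂ = 0} := by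
      intro y hy
      obtain ⟨a, ha, b, hb, rfl⟩ := Submodule.mem_sup.mp hy
      have h1 : ⟪v, a⟫_ℂ = 0 := by
        rw [hv, inner_sub_left]
        have h2 : ⟪u, a⟫_ℂ = 0 := by
          rw [← inner_conj_symm, huA a ha, map_zero]
        have h3 : ⟪(Submodule.orthogonalProjectionOnto B u : H), a⟫_ℂ = 0 := by
          rw [← inner_conj_symm, horth a ha _ hPB, map_zero]
        rw [h2, h3, sub_zero]
      simp only [Set.mem_setOf_eq, inner_add_right, h1, hvB b hb, add_zero]
    have hcl : closure ((A ⊔ B : Submodule ℂ H) : Set H) ⊆ {y | ⟪v, y⟫_ℂ = 0} :=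
      closure_minimal hsub (isClosed_eq (continuous_const.inner continuous_id) continuous_const)
    exact hcl hu
  have hvv : ⟪v, v⟫_ℂ = 0 := by
    rw [hv, inner_sub_right, hvu]  -- careful: v fixed, expand right argument
    rw [hvB _ hPB, sub_zero]
  have hv0 : v = 0 := inner_self_eq_zero.mp hvv
  have : u = (Submodule.orthogonalProjectionOnto B u : H) := by
    have := sub_eq_zero.mp hv0
    exact this
  rw [this]
  exact hPB

lemma posInvSqrt [CompleteSpace H] (A : H →L[ℂ] H)
    (hsa : ContinuousLinearMap.adjoint A = A)
    {c : ℝ} (hc : 0 < c) (hcoer : ∀ x : H, c * ‖x‖ ^ 2 ≤ RCLike.re ⟪A x, x⟫_ℂ) :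
    ∃ R Rinv : H →L[ℂ] H,
      ContinuousLinearMap.adjoint R = R ∧ ContinuousLinearMap.adjoint Rinv = Rinv ∧
      (0 : H →L[ℂ] H) ≤ R ∧ R ∘L R = A ∧ R ∘L Rinv = 1 ∧ Rinv ∘L R = 1 := by
  classical
  -- A is invertible
  have hlow : ∀ x : H, c * ‖x‖ ≤ ‖A x‖ := by
    intro x
    rcases eq_or_ne x 0 with rfl | hx
    · simp
    · have h1 : c * ‖x‖ ^ 2 ≤ ‖A x‖ * ‖x‖ := by
        refine le_trans (hcoer x) ?_
        refine le_trans (RCLike.re_le_norm _) ?_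
        exact norm_inner_le_norm _ _
      have hx0 : 0 < ‖x‖ := norm_pos_iff.mpr hx
      have := le_of_mul_le_mul_right (by nlinarith : (c * ‖x‖) * ‖x‖ ≤ ‖A x‖ * ‖x‖) hx0
      exact this
  have hanti : AntilipschitzWith (⟨c⁻¹, by positivity⟩ : NNReal) A := by
    apply A.antilipschitz_of_bound
    intro x
    have h2 : ‖x‖ ≤ c⁻¹ * ‖A x‖ := by
      rw [le_inv_mul_iff₀ hc]
      exact hlow x
    exact h2
  have hker : LinearMap.ker (A : H →ₗ[ℂ] H) = ⊥ := LinearMap.ker_eq_bot.mpr hanti.injective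
  have hclosed : IsClosed (LinearMap.range (A : H →ₗ[ℂ] H) : Set H) := by
    have h := hanti.isClosed_range A.uniformContinuous
    have heq : (LinearMap.range (A : H →ₗ[ℂ] H) : Set H) = Set.range A := by
      ext y; simp [LinearMap.mem_range, Set.mem_range]
    rw [heq]
    exact h
  have hrange : LinearMap.range (A : H →ₗ[ℂ] H) = ⊤ := by
    have horthbot : (LinearMap.range (A : H →ₗ[ℂ] H))ᗮ = ⊥ := by
      rw [Submodule.eq_bot_iff]
      intro y hy
      have h1 : ⟪A y, y⟫_ℂ = 0 :=
        (Submodule.mem_orthogonal _ y).mp hy (A y) (LinearMap.mem_range_self _ y)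
      have h2 := hcoer y
      rw [h1] at h2
      simp only [map_zero] at h2
      have : ‖y‖ ^ 2 ≤ 0 := by nlinarith
      have : ‖y‖ = 0 := by nlinarith [sq_nonneg ‖y‖, norm_nonneg y]
      exact norm_eq_zero.mp this
    have h3 := Submodule.topologicalClosure_eq_top_iff.mpr horthbot
    have h4 : (LinearMap.range (A : H →ₗ[ℂ] H)).topologicalClosure = LinearMap.range (A : H →ₗ[ℂ] H) :=
      le_antisymm (Submodule.topologicalClosure_minimal _ le_rfl hclosed)
        (Submodule.le_topologicalClosure _)
    rw [h4] at h3
    exact h3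
  set e := ContinuousLinearEquiv.ofBijective A hker hrange with he
  set Ainv : H →L[ℂ] H := (e.symm : H →L[ℂ] H) with hAinv
  have hA1 : A ∘L Ainv = 1 := by
    ext x
    have : A (e.symm x) = e (e.symm x) := by
      rw [he]; rfl
    simp only [ContinuousLinearMap.coe_comp', Function.comp_apply, hAinv,
      ContinuousLinearEquiv.coe_coe, ContinuousLinearMap.one_apply]
    rw [this, e.apply_symm_apply]
  have hA2 : Ainv ∘L A = 1 := by
    ext x
    have : A x = e x := by rw [he]; rfl
    simp only [ContinuousLinearMap.coe_comp', Function.comp_apply, hAinv,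
      ContinuousLinearEquiv.coe_coe, ContinuousLinearMap.one_apply]
    rw [this, e.symm_apply_apply]
  -- square root
  have hA0 : (0 : H →L[ℂ] H) ≤ A := by
    rw [ContinuousLinearMap.nonneg_iff_isPositive]
    refine ⟨(ContinuousLinearMap.isSelfAdjoint_iff'.mpr hsa).isSymmetric, fun x => ?_⟩
    calc (0:ℝ) ≤ c * ‖x‖ ^ 2 := by positivity
      _ ≤ RCLike.re ⟪A x, x⟫_ℂ := hcoer x
  set R := CFC.sqrt A with hRdef
  have hR0 : (0 : H →L[ℂ] H) ≤ R := CFC.sqrt_nonneg A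
  have hRR : R * R = A := CFC.sqrt_mul_sqrt_self A hA0
  have hRsa : ContinuousLinearMap.adjoint R = R :=
    ContinuousLinearMap.isSelfAdjoint_iff'.mp (IsSelfAdjoint.of_nonneg hR0)
  have hRA : R * A = A * R := by
    rw [← hRR, mul_assoc]
  have hmul1 : A * Ainv = 1 := hA1
  have hmul2 : Ainv * A = 1 := hA2
  have hAinvR : Ainv * R = R * Ainv := by
    have key : Ainv * (R * (A * Ainv)) = Ainv * (A * (R * Ainv)) := by
      rw [← mul_assoc R A, hRA, mul_assoc]
    calc Ainv * R = Ainv * (R * 1) := by rw [mul_one]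
      _ = Ainv * (R * (A * Ainv)) := by rw [hmul1]
      _ = Ainv * (A * (R * Ainv)) := key
      _ = (Ainv * A) * (R * Ainv) := by rw [mul_assoc]
      _ = R * Ainv := by rw [hmul2, one_mul]
  have hRRinv : R * (Ainv * R) = 1 := by
    calc R * (Ainv * R) = (R * Ainv) * R := by rw [mul_assoc]
      _ = (Ainv * R) * R := by rw [hAinvR]
      _ = Ainv * (R * R) := by rw [mul_assoc]
      _ = Ainv * A := by rw [hRR]
      _ = 1 := hA2
  have hRinvR : (Ainv * R) * R = 1 := by
    calc (Ainv * R) * R = Ainv * (R * R) := by rw [mul_assoc]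
      _ = Ainv * A := by rw [hRR]
      _ = 1 := hA2
  have hRinvsa : ContinuousLinearMap.adjoint (Ainv * R) = Ainv * R := by
    have h1 : ContinuousLinearMap.adjoint (R ∘L (Ainv * R)) = 1 := by
      rw [show R ∘L (Ainv * R) = R * (Ainv * R) from rfl, hRRinv]
      rw [show (1 : H →L[ℂ] H) = ContinuousLinearMap.id ℂ H from rfl]
      exact ContinuousLinearMap.adjoint_id
    rw [ContinuousLinearMap.adjoint_comp] at h1
    calc ContinuousLinearMap.adjoint (Ainv * R)
        = ContinuousLinearMap.adjoint (Ainv * R) * (R * (Ainv * R)) := by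
          rw [hRRinv, mul_one]
      _ = (ContinuousLinearMap.adjoint (Ainv * R) * R) * (Ainv * R) := by rw [mul_assoc]
      _ = (ContinuousLinearMap.adjoint (Ainv * R) ∘L ContinuousLinearMap.adjoint R)
            * (Ainv * R) := by rw [hRsa]; rfl
      _ = 1 * (Ainv * R) := by rw [h1]
      _ = Ainv * R := one_mul _
  exact ⟨R, Ainv * R, hRsa, hRinvsa, hR0, hRR, hRRinv, hRinvR⟩

end S9

namespace S9
variable {H : Type*} [NormedAddCommGroup H] [InnerProductSpace ℂ H]

lemma adjoint_one [CompleteSpace H] :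
    ContinuousLinearMap.adjoint (1 : H →L[ℂ] H) = 1 := by
  rw [ContinuousLinearMap.one_def]
  exact ContinuousLinearMap.adjoint_id

lemma adj_move [CompleteSpace H] (P : H →L[ℂ] H)
    (hP : ContinuousLinearMap.adjoint P = P) (a b : H) :
    ⟪P a, b⟫_ℂ = ⟪a, P b⟫_ℂ := by
  conv_lhs => rw [← hP]
  exact ContinuousLinearMap.adjoint_inner_left P b a

lemma inv_selfadj [CompleteSpace H] (A B : H →L[ℂ] H)
    (hA : ContinuousLinearMap.adjoint A = A) (h1 : A * B = 1) (h2 : B * A = 1) :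
    ContinuousLinearMap.adjoint B = B := by
  have h3 : ContinuousLinearMap.adjoint B * A = 1 := by
    have h4 := congrArg ContinuousLinearMap.adjoint h1
    rw [show A * B = A ∘L B from rfl, ContinuousLinearMap.adjoint_comp, hA, adjoint_one] at h4
    exact h4
  calc ContinuousLinearMap.adjoint B
      = ContinuousLinearMap.adjoint B * (A * B) := by rw [h1, mul_one]
    _ = (ContinuousLinearMap.adjoint B * A) * B := by rw [mul_assoc]
    _ = 1 * B := by rw [h3]
    _ = B := one_mul _

end S9

open scoped InnerProductSpace

/-- In the Fock model `F ≅ F²(Hₙ) ⊗ E` (creation operators `S_i`, word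
operators `Sw`, isometric embedding `J : E → F` onto `⋂ ker S_i*` with spanning translates),
let `T` be a strictly positive multi-Toeplitz operator with inverse `Tinv`, and
`ψ h := T⁻¹(1 ⊗ h)`.  Then the multi-analytic operator `M_ψ` (determined by
`M_ψ(e_w ⊗ h) = S_w ψ h`) is bounded and invertible, `N := (P_E T⁻¹|_E)^{1/2}` is
invertible, and `T = (M_ψ⁻¹)* (I ⊗ N²) (M_ψ⁻¹)`; thus `Θ := (I ⊗ N) M_ψ⁻¹` is a square
outer spectral factor of `T`: `T = Θ*Θ` with `Θ` multi-analytic and outer. -/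
theorem stmt_9 {F E : Type*}
    [NormedAddCommGroup F] [InnerProductSpace ℂ F] [CompleteSpace F]
    [NormedAddCommGroup E] [InnerProductSpace ℂ E] [CompleteSpace E]
    {n : ℕ} (S : Fin n → F →L[ℂ] F)
    (hSiso : ∀ i (x : F), ‖S i x‖ = ‖x‖)
    (hSorth : ∀ i j, i ≠ j → ContinuousLinearMap.adjoint (S i) ∘L S j = 0)
    (Sw : List (Fin n) → F →L[ℂ] F) (hSw_nil : Sw [] = 1)
    (hSw_cons : ∀ i w, Sw (i :: w) = S i ∘L Sw w)
    (J : E →L[ℂ] F) (hJiso : ∀ h, ‖J h‖ = ‖h‖)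
    (hJwand : LinearMap.range (J : E →ₗ[ℂ] F)
        = ⨅ i, LinearMap.ker (ContinuousLinearMap.adjoint (S i) : F →ₗ[ℂ] F))
    (hJspan : (Submodule.span ℂ
        (⋃ w : List (Fin n), Set.range fun h : E => Sw w (J h))).topologicalClosure = ⊤)
    (T Tinv : F →L[ℂ] F) (hTpos : T.IsPositive)
    (hTstrict : ∃ c : ℝ, 0 < c ∧ ∀ x : F, c * ‖x‖ ^ 2 ≤ (⟪T x, x⟫_ℂ).re)
    (hTinv₁ : T ∘L Tinv = 1) (hTinv₂ : Tinv ∘L T = 1)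
    (hT : ∀ i j, ContinuousLinearMap.adjoint (S i) ∘L T ∘L S j
        = if i = j then T else 0) :
    ∃ (Mψ Minv D : F →L[ℂ] F) (N Ninv : E →L[ℂ] E),
      (∀ i, Mψ ∘L S i = S i ∘L Mψ) ∧
      (∀ (w : List (Fin n)) (h : E), Mψ (Sw w (J h)) = Sw w (Tinv (J h))) ∧
      Mψ ∘L Minv = 1 ∧ Minv ∘L Mψ = 1 ∧
      N.IsPositive ∧
      (N ∘L N : E →L[ℂ] E) = ContinuousLinearMap.adjoint J ∘L Tinv ∘L J ∧
      N ∘L Ninv = 1 ∧ Ninv ∘L N = 1 ∧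
      (∀ i, D ∘L S i = S i ∘L D) ∧
      (∀ (w : List (Fin n)) (h : E), D (Sw w (J h)) = Sw w (J (N h))) ∧
      T = ContinuousLinearMap.adjoint (D ∘L Minv) ∘L (D ∘L Minv) ∧
      (Submodule.span ℂ (⋃ w : List (Fin n),
          Set.range fun h : E => Sw w (D (Minv (J h))))).topologicalClosure = ⊤ := by
  classical
  obtain ⟨c, hc, hTstr0⟩ := hTstrict
  have hTstr : ∀ x : F, c * ‖x‖ ^ 2 ≤ RCLike.re ⟪T x, x⟫_ℂ := by
    intro x; simpa using hTstr0 x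
  have hTsa : ContinuousLinearMap.adjoint T = T :=
    ContinuousLinearMap.isSelfAdjoint_iff'.mp hTpos.isSelfAdjoint
  have hTipt1 : ∀ x, T (Tinv x) = x := by
    intro x; have h1 := ContinuousLinearMap.ext_iff.mp hTinv₁ x; simpa using h1
  have hTipt2 : ∀ x, Tinv (T x) = x := by
    intro x; have h1 := ContinuousLinearMap.ext_iff.mp hTinv₂ x; simpa using h1
  have hTinvsa : ContinuousLinearMap.adjoint Tinv = Tinv :=
    S9.inv_selfadj T Tinv hTsa hTinv₁ hTinv₂
  -- inner product facts for isometries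
  have hJinner : ∀ a b : E, ⟪J a, J b⟫_ℂ = ⟪a, b⟫_ℂ := fun a b =>
    LinearIsometry.inner_map_map ⟨(J : E →ₗ[ℂ] F), hJiso⟩ a b
  have hSinner : ∀ i (a b : F), ⟪S i a, S i b⟫_ℂ = ⟪a, b⟫_ℂ := fun i a b =>
    LinearIsometry.inner_map_map ⟨(S i : F →ₗ[ℂ] F), hSiso i⟩ a b
  have hJJ : ∀ h : E, ContinuousLinearMap.adjoint J (J h) = h := by
    intro h
    refine ext_inner_left ℂ fun v => ?_
    rw [ContinuousLinearMap.adjoint_inner_right, hJinner]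
  have hSS : ∀ i (x : F), ContinuousLinearMap.adjoint (S i) (S i x) = x := by
    intro i x
    refine ext_inner_left ℂ fun v => ?_
    rw [ContinuousLinearMap.adjoint_inner_right, hSinner]
  have hSadjO : ∀ i j, i ≠ j → ∀ x : F, ContinuousLinearMap.adjoint (S i) (S j x) = 0 := by
    intro i j hij x
    have h1 := ContinuousLinearMap.ext_iff.mp (hSorth i j hij) x
    simpa using h1
  have hSadjJ : ∀ i (h : E), ContinuousLinearMap.adjoint (S i) (J h) = 0 := by
    intro i h
    have h1 : J h ∈ LinearMap.range (J : E →ₗ[ℂ] F) := LinearMap.mem_range_self _ h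
    rw [hJwand] at h1
    exact Submodule.mem_iInf _ |>.mp h1 i
  have hJadjS : ∀ i (x : F), ContinuousLinearMap.adjoint J (S i x) = 0 := by
    intro i x
    refine ext_inner_left ℂ fun v => ?_
    rw [ContinuousLinearMap.adjoint_inner_right,
      ← ContinuousLinearMap.adjoint_inner_left (S i) x (J v), hSadjJ, inner_zero_left,
      inner_zero_right]
  have hTpt : ∀ i j (x : F),
      ContinuousLinearMap.adjoint (S i) (T (S j x)) = if i = j then T x else 0 := by
    intro i j x
    have h1 := ContinuousLinearMap.ext_iff.mp (hT i j) x
    simp only [ContinuousLinearMap.coe_comp', Function.comp_apply] at h1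
    rw [h1]
    by_cases hij : i = j
    · rw [if_pos hij, if_pos hij]
    · rw [if_neg hij, if_neg hij, ContinuousLinearMap.zero_apply]
  have hSwA : ∀ i w (y : F), ContinuousLinearMap.adjoint (Sw (i :: w)) y
      = ContinuousLinearMap.adjoint (Sw w) (ContinuousLinearMap.adjoint (S i) y) := by
    intro i w y
    rw [hSw_cons i w, ContinuousLinearMap.adjoint_comp]
    rfl
  have hSwnilA : ∀ y : F, ContinuousLinearMap.adjoint (Sw []) y = y := by
    intro y
    rw [hSw_nil, S9.adjoint_one]
    rfl
  have hSwiso : ∀ w (x : F), ‖Sw w x‖ = ‖x‖ := by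
    intro w
    induction w with
    | nil => intro x; rw [hSw_nil]; rfl
    | cons i w ih =>
      intro x
      rw [hSw_cons]
      simp only [ContinuousLinearMap.coe_comp', Function.comp_apply]
      rw [hSiso, ih]
  -- Operator A = J* Tinv J and its square root N
  have hAsa : ContinuousLinearMap.adjoint
      (ContinuousLinearMap.adjoint J ∘L (Tinv ∘L J)) = ContinuousLinearMap.adjoint J ∘L (Tinv ∘L J) := by
    rw [ContinuousLinearMap.adjoint_comp, ContinuousLinearMap.adjoint_comp,
      ContinuousLinearMap.adjoint_adjoint, hTinvsa]
    rfl
  have hTinvstr : ∀ x : F, (c / (‖T‖ + 1) ^ 2) * ‖x‖ ^ 2 ≤ RCLike.re ⟪Tinv x, x⟫_ℂ := by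
    intro x
    have h1 : ⟪T (Tinv x), Tinv x⟫_ℂ = ⟪Tinv x, x⟫_ℂ := by
      rw [S9.adj_move T hTsa (Tinv x) (Tinv x), hTipt1]
    have h2 := hTstr (Tinv x)
    have h3 : ‖x‖ ≤ (‖T‖ + 1) * ‖Tinv x‖ := by
      calc ‖x‖ = ‖T (Tinv x)‖ := by rw [hTipt1]
        _ ≤ ‖T‖ * ‖Tinv x‖ := T.le_opNorm _
        _ ≤ (‖T‖ + 1) * ‖Tinv x‖ := by nlinarith [norm_nonneg (Tinv x)]
    have hT1 : (0:ℝ) < ‖T‖ + 1 := by positivity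
    rw [← h1]
    have h4 : ‖x‖ ^ 2 ≤ (‖T‖ + 1) ^ 2 * ‖Tinv x‖ ^ 2 := by nlinarith [norm_nonneg x, norm_nonneg (Tinv x)]
    have h5 : (c / (‖T‖ + 1) ^ 2) * ‖x‖ ^ 2 ≤ c * ‖Tinv x‖ ^ 2 := by
      rw [div_mul_eq_mul_div, div_le_iff₀ (by positivity)]
      nlinarith
    linarith
  have hAcoer : ∀ h : E, (c / (‖T‖ + 1) ^ 2) * ‖h‖ ^ 2
      ≤ RCLike.re ⟪(ContinuousLinearMap.adjoint J ∘L (Tinv ∘L J)) h, h⟫_ℂ := by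
    intro h
    have h1 : ⟪(ContinuousLinearMap.adjoint J ∘L (Tinv ∘L J)) h, h⟫_ℂ
        = ⟪Tinv (J h), J h⟫_ℂ := by
      simp only [ContinuousLinearMap.coe_comp', Function.comp_apply]
      rw [ContinuousLinearMap.adjoint_inner_left]
    rw [h1, ← hJiso h]
    exact hTinvstr (J h)
  obtain ⟨N, Ninv, hNsa, hNinvsa, hN0, hNN, hNNinv, hNinvN⟩ :=
    S9.posInvSqrt (ContinuousLinearMap.adjoint J ∘L (Tinv ∘L J)) hAsa
      (by positivity : (0:ℝ) < c / (‖T‖ + 1) ^ 2) hAcoer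
  have hNNpt : ∀ a : E, ContinuousLinearMap.adjoint J (Tinv (J a)) = N (N a) := by
    intro a
    have h1 := ContinuousLinearMap.ext_iff.mp hNN a
    simp only [ContinuousLinearMap.coe_comp', Function.comp_apply] at h1
    exact h1.symm
  have hNNinvpt : ∀ a : E, N (Ninv a) = a := by
    intro a; have h1 := ContinuousLinearMap.ext_iff.mp hNNinv a; simpa using h1
  have hNinvNpt : ∀ a : E, Ninv (N a) = a := by
    intro a; have h1 := ContinuousLinearMap.ext_iff.mp hNinvN a; simpa using h1
  -- Square root of T
  obtain ⟨R, Rinv, hRsa, hRinvsa, hR0, hRRT, hRRinv, hRinvR⟩ :=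
    S9.posInvSqrt T hTsa hc hTstr
  have hRRpt : ∀ x : F, R (R x) = T x := by
    intro x; have h1 := ContinuousLinearMap.ext_iff.mp hRRT x; simpa using h1
  have hRRinvpt : ∀ x : F, R (Rinv x) = x := by
    intro x; have h1 := ContinuousLinearMap.ext_iff.mp hRRinv x; simpa using h1
  have hRinvRpt : ∀ x : F, Rinv (R x) = x := by
    intro x; have h1 := ContinuousLinearMap.ext_iff.mp hRinvR x; simpa using h1
  -- ψ operator
  have hSwnilpt : ∀ y : F, Sw [] y = y := by
    intro y; rw [hSw_nil]; rfl
  have hTψ : ∀ h : E, T (Tinv (J h)) = J h := fun h => hTipt1 (J h)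
  -- word lemmas
  have CVlem : ∀ w v (h : E), ContinuousLinearMap.adjoint J
      (ContinuousLinearMap.adjoint (Sw w) (Sw v (J h))) = if w = v then h else 0 := by
    intro w
    induction w with
    | nil =>
      intro v h
      cases v with
      | nil => rw [hSwnilA, hSwnilpt, hJJ, if_pos rfl]
      | cons j v' =>
        rw [hSwnilA, hSw_cons]
        simp only [ContinuousLinearMap.coe_comp', Function.comp_apply]
        rw [hJadjS, if_neg (by simp)]
    | cons i w' ih =>
      intro v h
      cases v with
      | nil =>
        rw [hSwnilpt, hSwA, hSadjJ]
        simp only [map_zero]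
        rw [if_neg (by simp)]
      | cons j v' =>
        rw [hSw_cons j v']
        simp only [ContinuousLinearMap.coe_comp', Function.comp_apply]
        rw [hSwA]
        by_cases hij : i = j
        · subst hij
          rw [hSS]
          rw [ih v' h]
          by_cases hwv : w' = v'
          · rw [if_pos hwv, if_pos (by rw [hwv])]
          · rw [if_neg hwv, if_neg (by simp [hwv])]
        · rw [hSadjO i j hij]
          simp only [map_zero]
          rw [if_neg (by simp [hij])]
  have K2lem : ∀ w v (h : E), Ninv (Ninv (ContinuousLinearMap.adjoint J
      (Tinv (ContinuousLinearMap.adjoint (Sw w) (T (Sw v (Tinv (J h))))))))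
      = if w = v then h else 0 := by
    intro w
    induction w with
    | nil =>
      intro v h
      cases v with
      | nil =>
        rw [hSwnilA, hSwnilpt, hTψ, hNNpt, hNinvNpt, hNinvNpt, if_pos rfl]
      | cons j v' =>
        rw [hSwnilA, hSw_cons]
        simp only [ContinuousLinearMap.coe_comp', Function.comp_apply]
        rw [hTipt2, hJadjS]
        simp only [map_zero]
        rw [if_neg (by simp)]
    | cons i w' ih =>
      intro v h
      cases v with
      | nil =>
        rw [hSwnilpt, hTψ, hSwA, hSadjJ]
        simp only [map_zero]
        rw [if_neg (by simp)]
      | cons j v' =>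
        rw [hSw_cons j v']
        simp only [ContinuousLinearMap.coe_comp', Function.comp_apply]
        rw [hSwA, hTpt]
        by_cases hij : i = j
        · rw [if_pos hij]
          rw [ih v' h]
          by_cases hwv : w' = v'
          · rw [if_pos hwv, if_pos (by rw [hij, hwv])]
          · rw [if_neg hwv, if_neg (by simp [hwv])]
        · rw [if_neg hij]
          simp only [map_zero]
          rw [if_neg (by simp [hij])]
  -- length-based orthogonality lemmas
  have L0len : ∀ (u w : List (Fin n)), w.length < u.length → ∀ (h : E) (z : F),
      ⟪Sw w (J h), Sw u z⟫_ℂ = 0 := by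
    intro u
    induction u with
    | nil => intro w hlt h z; exact absurd hlt (Nat.not_lt_zero _)
    | cons j u' ih =>
      intro w hlt h z
      rw [hSw_cons j u']
      simp only [ContinuousLinearMap.coe_comp', Function.comp_apply]
      cases w with
      | nil =>
        rw [hSw_nil]
        simp only [ContinuousLinearMap.one_apply]
        rw [← ContinuousLinearMap.adjoint_inner_left (S j) (Sw u' z) (J h), hSadjJ,
          inner_zero_left]
      | cons i w' =>
        rw [hSw_cons i w']
        simp only [ContinuousLinearMap.coe_comp', Function.comp_apply]
        rw [← ContinuousLinearMap.adjoint_inner_left (S j) (Sw u' z) _]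
        by_cases hij : j = i
        · subst hij
          rw [hSS]
          refine ih w' ?_ h z
          simp only [List.length_cons] at hlt
          omega
        · rw [hSadjO j i hij, inner_zero_left]
  have Lpsilen : ∀ (u w : List (Fin n)), w.length ≤ u.length → w ≠ u →
      ∀ (h : E) (z : F), ⟪T (Sw w (Tinv (J h))), Sw u z⟫_ℂ = 0 := by
    intro u
    induction u with
    | nil =>
      intro w hlen hne h z
      have : w = [] := List.length_eq_zero_iff.mp (Nat.le_zero.mp hlen)
      exact absurd this hne
    | cons j u' ih =>
      intro w hlen hne h z
      rw [hSw_cons j u']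
      simp only [ContinuousLinearMap.coe_comp', Function.comp_apply]
      cases w with
      | nil =>
        rw [hSwnilpt, hTψ]
        rw [← ContinuousLinearMap.adjoint_inner_left (S j) (Sw u' z) (J h), hSadjJ,
          inner_zero_left]
      | cons i w' =>
        rw [hSw_cons i w']
        simp only [ContinuousLinearMap.coe_comp', Function.comp_apply]
        rw [← ContinuousLinearMap.adjoint_inner_left (S j) (Sw u' z) _, hTpt]
        by_cases hij : j = i
        · rw [if_pos hij]
          subst hij
          refine ih w' ?_ ?_ h z
          · simp only [List.length_cons] at hlen; omega
          · intro hh; exact hne (by rw [hh])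
        · rw [if_neg hij, inner_zero_left]
  -- inner product identities
  have hVinner : ∀ w v (a b : E), ⟪Sw w (J a), Sw v (J b)⟫_ℂ
      = if w = v then ⟪a, b⟫_ℂ else 0 := by
    intro w v a b
    rw [← ContinuousLinearMap.adjoint_inner_right (Sw w) (J a) (Sw v (J b)),
      ← ContinuousLinearMap.adjoint_inner_right J a _, CVlem w v b]
    by_cases hwv : w = v
    · rw [if_pos hwv, if_pos hwv]
    · rw [if_neg hwv, if_neg hwv, inner_zero_right]
  have hchain : ∀ w (b : E) (y : F), ⟪T (Sw w (Tinv (J b))), y⟫_ℂ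
      = ⟪b, N (N (Ninv (Ninv (ContinuousLinearMap.adjoint J
          (Tinv (ContinuousLinearMap.adjoint (Sw w) (T y)))))))⟫_ℂ := by
    intro w b y
    rw [S9.adj_move T hTsa, ← ContinuousLinearMap.adjoint_inner_right (Sw w)]
    rw [S9.adj_move Tinv hTinvsa, ← ContinuousLinearMap.adjoint_inner_right J]
    rw [hNNinvpt, hNNinvpt]
  have hTψinner : ∀ w v (a b : E), ⟪T (Sw w (Tinv (J a))), Sw v (Tinv (J b))⟫_ℂ
      = if w = v then ⟪N a, N b⟫_ℂ else 0 := by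
    intro w v a b
    rw [hchain, K2lem w v b]
    by_cases hwv : w = v
    · rw [if_pos hwv, if_pos hwv]
      exact (S9.adj_move N hNsa a (N b)).symm
    · rw [if_neg hwv, if_neg hwv]
      simp only [map_zero, inner_zero_right]
  -- Bessel inequalities
  have hreT : ∀ x : F, RCLike.re ⟪T x, x⟫_ℂ ≤ ‖T‖ * ‖x‖ ^ 2 := by
    intro x
    calc RCLike.re ⟪T x, x⟫_ℂ ≤ ‖⟪T x, x⟫_ℂ‖ := RCLike.re_le_norm _
      _ ≤ ‖T x‖ * ‖x‖ := norm_inner_le_norm _ _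
      _ ≤ (‖T‖ * ‖x‖) * ‖x‖ := mul_le_mul_of_nonneg_right (T.le_opNorm x) (norm_nonneg _)
      _ = ‖T‖ * ‖x‖ ^ 2 := by ring
  have hBes1 : ∀ (s : Finset (List (Fin n))) (x : F),
      ∑ w ∈ s, ‖ContinuousLinearMap.adjoint J (ContinuousLinearMap.adjoint (Sw w) x)‖ ^ 2
        ≤ 1 * ‖x‖ ^ 2 := by
    intro s x
    set a : List (Fin n) → E := fun w =>
      ContinuousLinearMap.adjoint J (ContinuousLinearMap.adjoint (Sw w) x) with ha
    have hip : ∀ w, ⟪Sw w (J (a w)), x⟫_ℂ = ⟪a w, a w⟫_ℂ := by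
      intro w
      rw [← ContinuousLinearMap.adjoint_inner_right (Sw w) (J (a w)) x,
        ← ContinuousLinearMap.adjoint_inner_right J (a w) _]
    have hb := S9.bessel (1 : F →L[ℂ] F) S9.adjoint_one
      (fun z => by simpa using inner_self_nonneg (𝕜 := ℂ) (x := z))
      s (fun w => Sw w (J (a w))) x
      (fun w _ v _ hwv => by
        rw [ContinuousLinearMap.one_apply, hVinner, if_neg hwv])
      (fun w _ => by
        rw [ContinuousLinearMap.one_apply, hip w, hVinner, if_pos rfl])
    have hb2 : ∑ w ∈ s, ‖a w‖ ^ 2 ≤ RCLike.re ⟪x, x⟫_ℂ := by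
      refine le_trans (le_of_eq ?_) (le_trans hb (le_of_eq ?_))
      · refine Finset.sum_congr rfl fun w _ => ?_
        rw [ContinuousLinearMap.one_apply, hVinner, if_pos rfl, inner_self_eq_norm_sq]
      · rw [ContinuousLinearMap.one_apply]
    rw [inner_self_eq_norm_sq] at hb2
    linarith
  have hBes2 : ∀ (s : Finset (List (Fin n))) (x : F),
      ∑ w ∈ s, ‖Ninv (Ninv (ContinuousLinearMap.adjoint J
        (Tinv (ContinuousLinearMap.adjoint (Sw w) (T x)))))‖ ^ 2
        ≤ (‖Ninv‖ ^ 2 * ‖T‖) * ‖x‖ ^ 2 := by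
    intro s x
    set b : List (Fin n) → E := fun w =>
      Ninv (Ninv (ContinuousLinearMap.adjoint J
        (Tinv (ContinuousLinearMap.adjoint (Sw w) (T x))))) with hb
    have hcoef : ∀ w, ⟪T (Sw w (Tinv (J (b w)))), x⟫_ℂ
        = ⟪T (Sw w (Tinv (J (b w)))), Sw w (Tinv (J (b w)))⟫_ℂ := by
      intro w
      rw [hchain w (b w) x, hTψinner w w (b w) (b w), if_pos rfl]
      exact (S9.adj_move N hNsa (b w) (N (b w))).symm
    have hpos : ∀ z : F, 0 ≤ RCLike.re ⟪T z, z⟫_ℂ := fun z =>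
      le_trans (by positivity) (hTstr z)
    have hb1 := S9.bessel T hTsa hpos s (fun w => Sw w (Tinv (J (b w)))) x
      (fun w _ v _ hwv => by rw [hTψinner, if_neg hwv])
      (fun w _ => hcoef w)
    have hb2 : ∑ w ∈ s, ‖N (b w)‖ ^ 2 ≤ ‖T‖ * ‖x‖ ^ 2 := by
      refine le_trans (le_of_eq ?_) (le_trans hb1 (hreT x))
      refine Finset.sum_congr rfl fun w _ => ?_
      rw [hTψinner w w (b w) (b w), if_pos rfl, inner_self_eq_norm_sq]
    have hb3 : ∀ w, ‖b w‖ ^ 2 ≤ ‖Ninv‖ ^ 2 * ‖N (b w)‖ ^ 2 := by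
      intro w
      have h1 : ‖b w‖ ≤ ‖Ninv‖ * ‖N (b w)‖ := by
        calc ‖b w‖ = ‖Ninv (N (b w))‖ := by rw [hNinvNpt]
          _ ≤ ‖Ninv‖ * ‖N (b w)‖ := Ninv.le_opNorm _
      calc ‖b w‖ ^ 2 ≤ (‖Ninv‖ * ‖N (b w)‖) ^ 2 :=
            pow_le_pow_left₀ (norm_nonneg _) h1 2
        _ = ‖Ninv‖ ^ 2 * ‖N (b w)‖ ^ 2 := by ring
    calc ∑ w ∈ s, ‖b w‖ ^ 2 ≤ ∑ w ∈ s, ‖Ninv‖ ^ 2 * ‖N (b w)‖ ^ 2 :=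
          Finset.sum_le_sum fun w _ => hb3 w
      _ = ‖Ninv‖ ^ 2 * ∑ w ∈ s, ‖N (b w)‖ ^ 2 := by rw [Finset.mul_sum]
      _ ≤ ‖Ninv‖ ^ 2 * (‖T‖ * ‖x‖ ^ 2) :=
          mul_le_mul_of_nonneg_left hb2 (by positivity)
      _ = (‖Ninv‖ ^ 2 * ‖T‖) * ‖x‖ ^ 2 := by ring
  -- Gram bounds
  have hGramV : ∀ (X : E →L[ℂ] E) (s : Finset (List (Fin n))) (a : List (Fin n) → E),
      ‖∑ w ∈ s, Sw w (J (X (a w)))‖ ^ 2 ≤ ‖X‖ ^ 2 * ∑ w ∈ s, ‖a w‖ ^ 2 := by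
    intro X s a
    rw [S9.norm_sum_sq s _ (fun w _ v _ hwv => by rw [hVinner, if_neg hwv])]
    calc ∑ w ∈ s, ‖Sw w (J (X (a w)))‖ ^ 2 = ∑ w ∈ s, ‖X (a w)‖ ^ 2 := by
          refine Finset.sum_congr rfl fun w _ => ?_
          rw [hSwiso, hJiso]
      _ ≤ ∑ w ∈ s, (‖X‖ * ‖a w‖) ^ 2 :=
          Finset.sum_le_sum fun w _ =>
            pow_le_pow_left₀ (norm_nonneg _) (X.le_opNorm _) 2
      _ = ‖X‖ ^ 2 * ∑ w ∈ s, ‖a w‖ ^ 2 := by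
          rw [Finset.mul_sum]
          exact Finset.sum_congr rfl fun w _ => by ring
  have hGramJ : ∀ (s : Finset (List (Fin n))) (a : List (Fin n) → E),
      ‖∑ w ∈ s, Sw w (J (a w))‖ ^ 2 ≤ 1 * ∑ w ∈ s, ‖a w‖ ^ 2 := by
    intro s a
    rw [S9.norm_sum_sq s _ (fun w _ v _ hwv => by rw [hVinner, if_neg hwv]), one_mul]
    refine le_of_eq (Finset.sum_congr rfl fun w _ => ?_)
    rw [hSwiso, hJiso]
  have hGramψ : ∀ (s : Finset (List (Fin n))) (a : List (Fin n) → E),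
      ‖∑ w ∈ s, Sw w (Tinv (J (a w)))‖ ^ 2 ≤ (c⁻¹ * ‖N‖ ^ 2) * ∑ w ∈ s, ‖a w‖ ^ 2 := by
    intro s a
    have h1 := hTstr (∑ w ∈ s, Sw w (Tinv (J (a w))))
    have h2 : RCLike.re ⟪T (∑ w ∈ s, Sw w (Tinv (J (a w)))), ∑ w ∈ s, Sw w (Tinv (J (a w)))⟫_ℂ
        = ∑ w ∈ s, ‖N (a w)‖ ^ 2 := by
      rw [map_sum, sum_inner, map_sum]
      refine Finset.sum_congr rfl fun w hw => ?_
      rw [inner_sum, Finset.sum_eq_single_of_mem w hw (fun v hv hvw => by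
        rw [hTψinner w v (a w) (a v), if_neg (fun hh => hvw hh.symm)])]
      rw [hTψinner w w (a w) (a w), if_pos rfl, inner_self_eq_norm_sq]
    have h3 : ∑ w ∈ s, ‖N (a w)‖ ^ 2 ≤ ‖N‖ ^ 2 * ∑ w ∈ s, ‖a w‖ ^ 2 := by
      calc ∑ w ∈ s, ‖N (a w)‖ ^ 2 ≤ ∑ w ∈ s, (‖N‖ * ‖a w‖) ^ 2 :=
            Finset.sum_le_sum fun w _ =>
              pow_le_pow_left₀ (norm_nonneg _) (N.le_opNorm _) 2
        _ = ‖N‖ ^ 2 * ∑ w ∈ s, ‖a w‖ ^ 2 := by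
            rw [Finset.mul_sum]
            exact Finset.sum_congr rfl fun w _ => by ring
    rw [h2] at h1
    have h4 : ‖∑ w ∈ s, Sw w (Tinv (J (a w)))‖ ^ 2 ≤ c⁻¹ * (‖N‖ ^ 2 * ∑ w ∈ s, ‖a w‖ ^ 2) := by
      rw [le_inv_mul_iff₀ hc]
      linarith
    calc ‖∑ w ∈ s, Sw w (Tinv (J (a w)))‖ ^ 2
        ≤ c⁻¹ * (‖N‖ ^ 2 * ∑ w ∈ s, ‖a w‖ ^ 2) := h4
      _ = (c⁻¹ * ‖N‖ ^ 2) * ∑ w ∈ s, ‖a w‖ ^ 2 := by ring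
  -- construct the four operators
  obtain ⟨Mψ, hMψ⟩ := S9.gen_op (fun w => Sw w ∘L (Tinv ∘L J))
    (fun w => ContinuousLinearMap.adjoint J ∘L ContinuousLinearMap.adjoint (Sw w))
    (Cf := c⁻¹ * ‖N‖ ^ 2) (CK := 1) (by positivity) zero_le_one
    (fun s a => by
      simpa only [ContinuousLinearMap.coe_comp', Function.comp_apply] using hGramψ s a)
    (fun s x => by
      simpa only [ContinuousLinearMap.coe_comp', Function.comp_apply] using hBes1 s x)
  obtain ⟨Minv, hMinv⟩ := S9.gen_op (fun w => Sw w ∘L J)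
    (fun w => (Ninv ∘L Ninv) ∘L (ContinuousLinearMap.adjoint J
      ∘L (Tinv ∘L (ContinuousLinearMap.adjoint (Sw w) ∘L T))))
    (Cf := 1) (CK := ‖Ninv‖ ^ 2 * ‖T‖) zero_le_one (by positivity)
    (fun s a => by
      simpa only [ContinuousLinearMap.coe_comp', Function.comp_apply] using hGramJ s a)
    (fun s x => by
      simpa only [ContinuousLinearMap.coe_comp', Function.comp_apply] using hBes2 s x)
  obtain ⟨D, hD⟩ := S9.gen_op (fun w => (Sw w ∘L J) ∘L N)
    (fun w => ContinuousLinearMap.adjoint J ∘L ContinuousLinearMap.adjoint (Sw w))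
    (Cf := ‖N‖ ^ 2) (CK := 1) (by positivity) zero_le_one
    (fun s a => by
      simpa only [ContinuousLinearMap.coe_comp', Function.comp_apply] using hGramV N s a)
    (fun s x => by
      simpa only [ContinuousLinearMap.coe_comp', Function.comp_apply] using hBes1 s x)
  obtain ⟨D2, hD2⟩ := S9.gen_op (fun w => (Sw w ∘L J) ∘L Ninv)
    (fun w => ContinuousLinearMap.adjoint J ∘L ContinuousLinearMap.adjoint (Sw w))
    (Cf := ‖Ninv‖ ^ 2) (CK := 1) (by positivity) zero_le_one
    (fun s a => by
      simpa only [ContinuousLinearMap.coe_comp', Function.comp_apply] using hGramV Ninv s a)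
    (fun s x => by
      simpa only [ContinuousLinearMap.coe_comp', Function.comp_apply] using hBes1 s x)
  -- generic value lemma
  have valGEN : ∀ (f : List (Fin n) → E →L[ℂ] F) (K : List (Fin n) → F →L[ℂ] E)
      (L : F →L[ℂ] F), (∀ x, HasSum (fun w => f w (K w x)) (L x)) →
      ∀ (g : List (Fin n) → E → F),
      (∀ w v h, K w (g v h) = if w = v then h else 0) →
      ∀ v (h : E), L (g v h) = f v h := by
    intro f K L hL g hKg v h
    have h3 : HasSum (fun w => f w (K w (g v h))) (f v (K v (g v h))) :=
      hasSum_single v (fun w hw => by rw [hKg w v h, if_neg hw, map_zero])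
    have h2 : (f v) (K v (g v h)) = f v h := by rw [hKg v v h, if_pos rfl]
    rw [h2] at h3
    exact (hL (g v h)).unique h3
  -- generic commutation lemma
  have commGEN : ∀ (f : List (Fin n) → E →L[ℂ] F) (K : List (Fin n) → F →L[ℂ] E)
      (L : F →L[ℂ] F), (∀ x, HasSum (fun w => f w (K w x)) (L x)) →
      (∀ i w (e : E), S i (f w e) = f (i :: w) e) →
      (∀ i (x : F), K [] (S i x) = 0) →
      (∀ i j w (x : F), K (j :: w) (S i x) = if j = i then K w x else 0) →
      ∀ i, L ∘L S i = S i ∘L L := by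
    intro f K L hL hfc hK0 hKc i
    ext x
    simp only [ContinuousLinearMap.coe_comp', Function.comp_apply]
    have h2 : HasSum (fun w => S i (f w (K w x))) (S i (L x)) := (S i).hasSum (hL x)
    have h3 : HasSum (fun w => f (i :: w) (K w x)) (S i (L x)) := by
      have he : (fun w => S i (f w (K w x))) = fun w => f (i :: w) (K w x) :=
        funext fun w => hfc i w _
      rwa [he] at h2
    have h4 : HasSum (fun w => f w (K w (S i x))) (S i (L x)) := by
      refine (Function.Injective.hasSum_iff (List.cons_injective (a := i)) ?_).mp ?_
      · intro w hw
        match w with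
        | [] => rw [hK0 i x, map_zero]
        | j :: w' =>
          have hji : j ≠ i := by
            intro hji
            exact hw ⟨w', by rw [hji]⟩
          rw [hKc i j w' x, if_neg hji, map_zero]
      · have he2 : ((fun w => f w (K w (S i x))) ∘ (fun w => i :: w))
            = fun w => f (i :: w) (K w x) := by
          funext w
          simp only [Function.comp_apply]
          rw [hKc i i w x, if_pos rfl]
        rw [he2]
        exact h3
    exact (hL (S i x)).unique h4
  -- value lemmas
  have hMψval : ∀ w (h : E), Mψ (Sw w (J h)) = Sw w (Tinv (J h)) := by
    intro w h
    have h1 := valGEN _ _ Mψ hMψ (fun v h => Sw v (J h))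
      (fun w v h => by
        simp only [ContinuousLinearMap.coe_comp', Function.comp_apply]
        exact CVlem w v h) w h
    simpa only [ContinuousLinearMap.coe_comp', Function.comp_apply] using h1
  have hMinvval : ∀ w (h : E), Minv (Sw w (Tinv (J h))) = Sw w (J h) := by
    intro w h
    have h1 := valGEN _ _ Minv hMinv (fun v h => Sw v (Tinv (J h)))
      (fun w v h => by
        simp only [ContinuousLinearMap.coe_comp', Function.comp_apply]
        exact K2lem w v h) w h
    simpa only [ContinuousLinearMap.coe_comp', Function.comp_apply] using h1
  have hDval : ∀ w (h : E), D (Sw w (J h)) = Sw w (J (N h)) := by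
    intro w h
    have h1 := valGEN _ _ D hD (fun v h => Sw v (J h))
      (fun w v h => by
        simp only [ContinuousLinearMap.coe_comp', Function.comp_apply]
        exact CVlem w v h) w h
    simpa only [ContinuousLinearMap.coe_comp', Function.comp_apply] using h1
  have hD2val : ∀ w (h : E), D2 (Sw w (J h)) = Sw w (J (Ninv h)) := by
    intro w h
    have h1 := valGEN _ _ D2 hD2 (fun v h => Sw v (J h))
      (fun w v h => by
        simp only [ContinuousLinearMap.coe_comp', Function.comp_apply]
        exact CVlem w v h) w h
    simpa only [ContinuousLinearMap.coe_comp', Function.comp_apply] using h1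
  -- commutation lemmas
  have hK1c0 : ∀ i (x : F), (ContinuousLinearMap.adjoint J
      ∘L ContinuousLinearMap.adjoint (Sw [])) (S i x) = 0 := by
    intro i x
    simp only [ContinuousLinearMap.coe_comp', Function.comp_apply]
    rw [hSwnilA, hJadjS]
  have hK1cc : ∀ i j w (x : F), (ContinuousLinearMap.adjoint J
      ∘L ContinuousLinearMap.adjoint (Sw (j :: w))) (S i x)
      = if j = i then (ContinuousLinearMap.adjoint J
        ∘L ContinuousLinearMap.adjoint (Sw w)) x else 0 := by
    intro i j w x
    simp only [ContinuousLinearMap.coe_comp', Function.comp_apply]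
    rw [hSwA]
    by_cases hji : j = i
    · subst hji
      rw [hSS, if_pos rfl]
    · rw [hSadjO j i hji, map_zero, map_zero, if_neg hji]
  have hK2c0 : ∀ i (x : F), ((Ninv ∘L Ninv) ∘L (ContinuousLinearMap.adjoint J
      ∘L (Tinv ∘L (ContinuousLinearMap.adjoint (Sw []) ∘L T)))) (S i x) = 0 := by
    intro i x
    simp only [ContinuousLinearMap.coe_comp', Function.comp_apply]
    rw [hSwnilA, hTipt2, hJadjS, map_zero, map_zero]
  have hK2cc : ∀ i j w (x : F), ((Ninv ∘L Ninv) ∘L (ContinuousLinearMap.adjoint J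
      ∘L (Tinv ∘L (ContinuousLinearMap.adjoint (Sw (j :: w)) ∘L T)))) (S i x)
      = if j = i then ((Ninv ∘L Ninv) ∘L (ContinuousLinearMap.adjoint J
        ∘L (Tinv ∘L (ContinuousLinearMap.adjoint (Sw w) ∘L T)))) x else 0 := by
    intro i j w x
    simp only [ContinuousLinearMap.coe_comp', Function.comp_apply]
    rw [hSwA, hTpt]
    by_cases hji : j = i
    · rw [if_pos hji, if_pos hji]
    · rw [if_neg hji, if_neg hji, map_zero, map_zero, map_zero, map_zero, map_zero]
  have hMψcomm : ∀ i, Mψ ∘L S i = S i ∘L Mψ :=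
    commGEN _ _ Mψ hMψ (fun i w e => by rw [hSw_cons]; rfl)
      (fun i x => hK1c0 i x) (fun i j w x => hK1cc i j w x)
  have hMinvcomm : ∀ i, Minv ∘L S i = S i ∘L Minv :=
    commGEN _ _ Minv hMinv (fun i w e => by rw [hSw_cons]; rfl)
      (fun i x => hK2c0 i x) (fun i j w x => hK2cc i j w x)
  have hDcomm : ∀ i, D ∘L S i = S i ∘L D :=
    commGEN _ _ D hD (fun i w e => by rw [hSw_cons]; rfl)
      (fun i x => hK1c0 i x) (fun i j w x => hK1cc i j w x)
  have hD2comm : ∀ i, D2 ∘L S i = S i ∘L D2 :=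
    commGEN _ _ D2 hD2 (fun i w e => by rw [hSw_cons]; rfl)
      (fun i x => hK1c0 i x) (fun i j w x => hK1cc i j w x)
  -- pointwise commutation
  have hMinvSpt : ∀ i (x : F), Minv (S i x) = S i (Minv x) := by
    intro i x
    have h1 := ContinuousLinearMap.ext_iff.mp (hMinvcomm i) x
    simpa using h1
  have hDSpt : ∀ i (x : F), D (S i x) = S i (D x) := by
    intro i x
    have h1 := ContinuousLinearMap.ext_iff.mp (hDcomm i) x
    simpa using h1
  -- Minv ∘ Mψ = 1
  have hdenseV : Dense ((Submodule.span ℂ (⋃ w : List (Fin n),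
      Set.range fun h : E => Sw w (J h)) : Submodule ℂ F) : Set F) := S9.dense_span hJspan
  have hMinvMψ : Minv ∘L Mψ = 1 := by
    refine ContinuousLinearMap.ext_on hdenseV ?_
    rintro u hu
    obtain ⟨w, hw⟩ := Set.mem_iUnion.mp hu
    obtain ⟨h, rfl⟩ := hw
    simp only [ContinuousLinearMap.coe_comp', Function.comp_apply,
      ContinuousLinearMap.one_apply]
    rw [hMψval, hMinvval]
  have hMinvMψpt : ∀ x : F, Minv (Mψ x) = x := by
    intro x
    have h1 := ContinuousLinearMap.ext_iff.mp hMinvMψ x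
    simpa using h1
  -- auxiliary: words compose
  have hSw_append : ∀ (u v : List (Fin n)) (z : F), Sw (u ++ v) z = Sw u (Sw v z) := by
    intro u
    induction u with
    | nil =>
      intro v z
      rw [List.nil_append, hSwnilpt]
    | cons i u ih =>
      intro v z
      rw [List.cons_append, hSw_cons, hSw_cons]
      simp only [ContinuousLinearMap.coe_comp', Function.comp_apply]
      rw [ih]
  -- OUTERNESS: the ψ-translates span a dense subspace
  have outer : (Submodule.span ℂ (⋃ w : List (Fin n),
      Set.range fun h : E => Sw w (Tinv (J h)))).topologicalClosure = ⊤ := by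
    rw [Submodule.topologicalClosure_eq_top_iff, Submodule.eq_bot_iff]
    intro x hx
    have hxg : ∀ (w : List (Fin n)) (h : E), ⟪Sw w (Tinv (J h)), x⟫_ℂ = 0 := by
      intro w h
      exact (Submodule.mem_orthogonal _ x).mp hx _
        (Submodule.subset_span (Set.mem_iUnion.mpr ⟨w, Set.mem_range_self h⟩))
    have hRip : ∀ a b : F, ⟪R a, R b⟫_ℂ = ⟪T a, b⟫_ℂ := by
      intro a b
      rw [S9.adj_move R hRsa a (R b), hRRpt, ← S9.adj_move T hTsa]
    set M : ℕ → Submodule ℂ F := fun k => Submodule.span ℂ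
      (⋃ (w : List (Fin n)) (_ : w.length = k), Set.range ⇑(Sw w)) with hMdef
    set Ψ : ℕ → Submodule ℂ F := fun k => Submodule.span ℂ
      (⋃ (w : List (Fin n)) (_ : w.length = k),
        Set.range fun h : E => Sw w (Tinv (J h))) with hΨdef
    have hxΨ : ∀ k, ∀ p ∈ Ψ k, ⟪p, x⟫_ℂ = 0 := by
      intro k p hp
      induction hp using Submodule.span_induction with
      | mem p hp =>
        obtain ⟨w, hw⟩ := Set.mem_iUnion.mp hp
        obtain ⟨hwk, hw2⟩ := Set.mem_iUnion.mp hw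
        obtain ⟨h, rfl⟩ := hw2
        exact hxg w h
      | zero => simp
      | add a b _ _ ha hb => rw [inner_add_left, ha, hb, add_zero]
      | smul r a _ ha => rw [inner_smul_left, ha, mul_zero]
    have hΨM : ∀ k, ∀ p ∈ Ψ k, ∀ m ∈ M (k + 1), ⟪T p, m⟫_ℂ = 0 := by
      intro k p hp
      induction hp using Submodule.span_induction with
      | mem p hp =>
        intro m hm
        obtain ⟨w, hw⟩ := Set.mem_iUnion.mp hp
        obtain ⟨hwk, hw2⟩ := Set.mem_iUnion.mp hw
        obtain ⟨h, rfl⟩ := hw2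
        induction hm using Submodule.span_induction with
        | mem m hm =>
          obtain ⟨u, hu⟩ := Set.mem_iUnion.mp hm
          obtain ⟨huk, hu2⟩ := Set.mem_iUnion.mp hu
          obtain ⟨z, rfl⟩ := hu2
          refine Lpsilen u w ?_ ?_ h z
          · rw [hwk, huk]; omega
          · intro he
            rw [he, huk] at hwk
            omega
        | zero => rw [inner_zero_right]
        | add a b _ _ ha hb => rw [inner_add_right, ha, hb, add_zero]
        | smul r a _ ha => rw [inner_smul_right, ha, mul_zero]
      | zero => intro m hm; rw [map_zero, inner_zero_left]
      | add a b _ _ ha hb =>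
        intro m hm
        rw [map_add, inner_add_left, ha m hm, hb m hm, add_zero]
      | smul r a _ ha =>
        intro m hm
        rw [map_smul, inner_smul_left, ha m hm, mul_zero]
    -- kernel of J* is contained in the closure of M 1
    have hM1 : ∀ z : F, ContinuousLinearMap.adjoint J z = 0 →
        z ∈ (M 1).topologicalClosure := by
      intro z hz
      have h1 : (M 1).topologicalClosure = ((M 1)ᗮ)ᗮ :=
        (Submodule.orthogonal_orthogonal_eq_closure _).symm
      rw [h1, Submodule.mem_orthogonal]
      intro y hy
      have hyO : ∀ u ∈ M 1, ⟪u, y⟫_ℂ = 0 := (Submodule.mem_orthogonal _ y).mp hy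
      have hyr : ∀ i, ContinuousLinearMap.adjoint (S i) y = 0 := by
        intro i
        refine ext_inner_left ℂ fun v => ?_
        rw [ContinuousLinearMap.adjoint_inner_right, inner_zero_right]
        refine hyO (S i v) ?_
        refine Submodule.subset_span (Set.mem_iUnion.mpr ⟨[i],
          Set.mem_iUnion.mpr ⟨rfl, ⟨v, ?_⟩⟩⟩)
        rw [hSw_cons]
        simp only [ContinuousLinearMap.coe_comp', Function.comp_apply]
        rw [hSwnilpt]
      have hymem : y ∈ LinearMap.range (J : E →ₗ[ℂ] F) := by
        rw [hJwand, Submodule.mem_iInf]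
        intro i
        exact LinearMap.mem_ker.mpr (hyr i)
      obtain ⟨h, rfl⟩ := hymem
      rw [ContinuousLinearMap.coe_coe, ← ContinuousLinearMap.adjoint_inner_right J h z, hz, inner_zero_right]
    -- decomposition of M k
    have hdec : ∀ k, M k ≤ Ψ k ⊔ (M (k + 1)).topologicalClosure := by
      intro k
      refine Submodule.span_le.mpr ?_
      intro y hy
      obtain ⟨w, hw1⟩ := Set.mem_iUnion.mp hy
      obtain ⟨hwk, hw2⟩ := Set.mem_iUnion.mp hw1
      obtain ⟨z, rfl⟩ := hw2
      set a0 := Ninv (Ninv (ContinuousLinearMap.adjoint J z)) with ha0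
      have hsplit : Sw w z = Sw w (Tinv (J a0)) + Sw w (z - Tinv (J a0)) := by
        rw [← map_add]
        congr 1
        abel
      rw [SetLike.mem_coe, hsplit]
      refine Submodule.add_mem _ ?_ ?_
      · refine Submodule.mem_sup_left ?_
        exact Submodule.subset_span (Set.mem_iUnion.mpr ⟨w,
          Set.mem_iUnion.mpr ⟨hwk, ⟨a0, rfl⟩⟩⟩)
      · refine Submodule.mem_sup_right ?_
        have hz1 : ContinuousLinearMap.adjoint J (z - Tinv (J a0)) = 0 := by
          rw [map_sub, hNNpt, ha0, hNNinvpt, hNNinvpt, sub_self]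
        have hz2 := hM1 _ hz1
        have himg : ⇑(Sw w) '' ((M 1 : Submodule ℂ F) : Set F)
            ⊆ ((M (k + 1) : Submodule ℂ F) : Set F) := by
          rintro _ ⟨m, hm, rfl⟩
          rw [SetLike.mem_coe]
          have hm' : m ∈ M 1 := hm
          clear hm
          induction hm' using Submodule.span_induction with
          | mem m hm =>
            obtain ⟨u, hu1⟩ := Set.mem_iUnion.mp hm
            obtain ⟨hu1len, hu2⟩ := Set.mem_iUnion.mp hu1
            obtain ⟨zz, rfl⟩ := hu2
            rw [← hSw_append]
            exact Submodule.subset_span (Set.mem_iUnion.mpr ⟨w ++ u,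
              Set.mem_iUnion.mpr ⟨by rw [List.length_append, hwk, hu1len], ⟨zz, rfl⟩⟩⟩)
          | zero => rw [map_zero]; exact Submodule.zero_mem _
          | add a b _ _ ha hb => rw [map_add]; exact Submodule.add_mem _ ha hb
          | smul r a _ ha => rw [map_smul]; exact Submodule.smul_mem _ r ha
        have hsub : ⇑(Sw w) '' closure ((M 1 : Submodule ℂ F) : Set F)
            ⊆ closure ((M (k + 1) : Submodule ℂ F) : Set F) :=
          Set.Subset.trans (image_closure_subset_closure_image (Sw w).continuous)
            (closure_mono himg)
        have hz3 : Sw w (z - Tinv (J a0))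
            ∈ closure ((M (k + 1) : Submodule ℂ F) : Set F) := by
          apply hsub
          refine ⟨z - Tinv (J a0), ?_, rfl⟩
          have hz2' : z - Tinv (J a0) ∈ ((M 1).topologicalClosure : Set F) := hz2
          rwa [Submodule.topologicalClosure_coe] at hz2'
        have hz4 : Sw w (z - Tinv (J a0)) ∈ ((M (k + 1)).topologicalClosure : Set F) := by
          rw [Submodule.topologicalClosure_coe]
          exact hz3
        exact hz4
    -- main induction
    have claim : ∀ k, R (Tinv x)
        ∈ closure ((Submodule.map (R : F →ₗ[ℂ] F) (M k) : Submodule ℂ F) : Set F) := by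
      intro k
      induction k with
      | zero =>
        have hMtop : M 0 = ⊤ := by
          rw [Submodule.eq_top_iff']
          intro y
          exact Submodule.subset_span (Set.mem_iUnion.mpr ⟨[],
            Set.mem_iUnion.mpr ⟨rfl, ⟨y, hSwnilpt y⟩⟩⟩)
        have hmaptop : Submodule.map (R : F →ₗ[ℂ] F) (M 0) = ⊤ := by
          rw [hMtop, Submodule.map_top, LinearMap.range_eq_top]
          exact fun y => ⟨Rinv y, hRRinvpt y⟩
        rw [hmaptop]
        simp
      | succ k ih =>
        have hBc : IsClosed (((Submodule.map (R : F →ₗ[ℂ] F) (M (k + 1))).topologicalClosure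
            : Submodule ℂ F) : Set F) := Submodule.isClosed_topologicalClosure _
        have horth : ∀ a ∈ Submodule.map (R : F →ₗ[ℂ] F) (Ψ k),
            ∀ b ∈ (Submodule.map (R : F →ₗ[ℂ] F) (M (k + 1))).topologicalClosure, ⟪a, b⟫_ℂ = 0 := by
          rintro a ⟨p, hp, rfl⟩ b hb
          have hgen : ∀ b' ∈ Submodule.map (R : F →ₗ[ℂ] F) (M (k + 1)), ⟪R p, b'⟫_ℂ = 0 := by
            rintro b' ⟨m, hm, rfl⟩
            rw [ContinuousLinearMap.coe_coe, hRip p m]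
            exact hΨM k p hp m hm
          have hclosed : IsClosed {y : F | ⟪R p, y⟫_ℂ = 0} :=
            isClosed_eq (continuous_const.inner continuous_id) continuous_const
          have hb2 : b ∈ closure ((Submodule.map (R : F →ₗ[ℂ] F) (M (k + 1)) : Submodule ℂ F) : Set F) := by
            have hb' : b ∈ ((Submodule.map (R : F →ₗ[ℂ] F) (M (k + 1))).topologicalClosure : Set F) := hb
            rwa [Submodule.topologicalClosure_coe] at hb'
          exact closure_minimal (fun b' hb' => hgen b' hb') hclosed hb2
        have huA : ∀ a ∈ Submodule.map (R : F →ₗ[ℂ] F) (Ψ k), ⟪a, R (Tinv x)⟫_ℂ = 0 := by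
          rintro a ⟨p, hp, rfl⟩
          rw [ContinuousLinearMap.coe_coe, hRip p (Tinv x), S9.adj_move T hTsa p (Tinv x), hTipt1]
          exact hxΨ k p hp
        have hu : R (Tinv x) ∈ closure (((Submodule.map (R : F →ₗ[ℂ] F) (Ψ k)
            ⊔ (Submodule.map (R : F →ₗ[ℂ] F) (M (k + 1))).topologicalClosure) : Submodule ℂ F) : Set F) := by
          have hle : Submodule.map (R : F →ₗ[ℂ] F) (M k) ≤ Submodule.map (R : F →ₗ[ℂ] F) (Ψ k)
              ⊔ (Submodule.map (R : F →ₗ[ℂ] F) (M (k + 1))).topologicalClosure := by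
            have h1 : Submodule.map (R : F →ₗ[ℂ] F) (M k)
                ≤ Submodule.map (R : F →ₗ[ℂ] F) (Ψ k ⊔ (M (k + 1)).topologicalClosure) :=
              Submodule.map_mono (hdec k)
            refine le_trans h1 ?_
            rw [Submodule.map_sup]
            refine sup_le_sup le_rfl ?_
            rintro b ⟨m, hm, rfl⟩
            have hm2 : m ∈ closure ((M (k + 1) : Submodule ℂ F) : Set F) := by
              have hm' : m ∈ ((M (k + 1)).topologicalClosure : Set F) := hm
              rwa [Submodule.topologicalClosure_coe] at hm'
            have h3 : R m ∈ closure (⇑R '' ((M (k + 1) : Submodule ℂ F) : Set F)) :=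
              image_closure_subset_closure_image R.continuous ⟨m, hm2, rfl⟩
            have h4 : ⇑R '' ((M (k + 1) : Submodule ℂ F) : Set F)
                = ((Submodule.map (R : F →ₗ[ℂ] F) (M (k + 1)) : Submodule ℂ F) : Set F) :=
              (Submodule.map_coe _ _).symm
            rw [h4] at h3
            have h5 : R m ∈ ((Submodule.map (R : F →ₗ[ℂ] F) (M (k + 1))).topologicalClosure : Set F) := by
              rw [Submodule.topologicalClosure_coe]
              exact h3
            exact h5
          exact closure_mono (SetLike.coe_subset_coe.mpr hle) ih
        have hfin := S9.step_mem hBc horth hu huA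
        have hfin' : R (Tinv x)
            ∈ (((Submodule.map (R : F →ₗ[ℂ] F) (M (k + 1))).topologicalClosure : Submodule ℂ F) : Set F) :=
          hfin
        rwa [Submodule.topologicalClosure_coe] at hfin'
    -- conclude
    have hxt : ∀ (v : List (Fin n)) (h : E), ⟪Sw v (J h), Tinv x⟫_ℂ = 0 := by
      intro v h
      have h1 : (Tinv x) = Rinv (R (Tinv x)) := (hRinvRpt _).symm
      rw [h1, ← S9.adj_move Rinv hRinvsa (Sw v (J h)) (R (Tinv x))]
      have hgen : ∀ b ∈ Submodule.map (R : F →ₗ[ℂ] F) (M (v.length + 1)),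
          ⟪Rinv (Sw v (J h)), b⟫_ℂ = 0 := by
        rintro b ⟨m, hm, rfl⟩
        rw [ContinuousLinearMap.coe_coe, S9.adj_move Rinv hRinvsa (Sw v (J h)) (R m), hRinvRpt]
        induction hm using Submodule.span_induction with
        | mem m hm =>
          obtain ⟨u, hu1⟩ := Set.mem_iUnion.mp hm
          obtain ⟨hulen, hu2⟩ := Set.mem_iUnion.mp hu1
          obtain ⟨z, rfl⟩ := hu2
          refine L0len u v ?_ h z
          rw [hulen]
          omega
        | zero => rw [inner_zero_right]
        | add a b _ _ ha hb => rw [inner_add_right, ha, hb, add_zero]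
        | smul r a _ ha => rw [inner_smul_right, ha, mul_zero]
      have hclosed2 : IsClosed {y : F | ⟪Rinv (Sw v (J h)), y⟫_ℂ = 0} :=
        isClosed_eq (continuous_const.inner continuous_id) continuous_const
      exact closure_minimal (fun b hb => hgen b hb) hclosed2 (claim (v.length + 1))
    have hxt0 : Tinv x = 0 := by
      refine S9.eq_zero_of_dense_span hJspan ?_
      intro u hu
      obtain ⟨w, hw⟩ := Set.mem_iUnion.mp hu
      obtain ⟨h, rfl⟩ := hw
      exact hxt w h
    have hfin : x = T (Tinv x) := (hTipt1 x).symm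
    rw [hfin, hxt0, map_zero]
  -- Mψ ∘ Minv = 1 (uses outerness)
  have hdenseΨ : Dense ((Submodule.span ℂ (⋃ w : List (Fin n),
      Set.range fun h : E => Sw w (Tinv (J h))) : Submodule ℂ F) : Set F) :=
    S9.dense_span outer
  have hMψMinv : Mψ ∘L Minv = 1 := by
    refine ContinuousLinearMap.ext_on hdenseΨ ?_
    rintro u hu
    obtain ⟨w, hw⟩ := Set.mem_iUnion.mp hu
    obtain ⟨h, rfl⟩ := hw
    simp only [ContinuousLinearMap.coe_comp', Function.comp_apply,
      ContinuousLinearMap.one_apply]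
    rw [hMinvval, hMψval]
  have hMψMinvpt : ∀ x : F, Mψ (Minv x) = x := by
    intro x; have h1 := ContinuousLinearMap.ext_iff.mp hMψMinv x; simpa using h1
  have hDD2pt : ∀ x : F, D (D2 x) = x := by
    have hDD2 : D ∘L D2 = 1 := by
      refine ContinuousLinearMap.ext_on hdenseV ?_
      rintro u hu
      obtain ⟨w, hw⟩ := Set.mem_iUnion.mp hu
      obtain ⟨h, rfl⟩ := hw
      simp only [ContinuousLinearMap.coe_comp', Function.comp_apply,
        ContinuousLinearMap.one_apply]
      rw [hD2val, hDval, hNNinvpt]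
    intro x
    have h1 := ContinuousLinearMap.ext_iff.mp hDD2 x
    simpa using h1
  -- the factorization T = Θ* Θ
  have hE1 : ∀ w (h : E), ContinuousLinearMap.adjoint (D ∘L Minv) (Sw w (J (N h)))
      = T (Sw w (Tinv (J h))) := by
    intro w h
    refine S9.eq_of_dense_span outer ?_
    intro u hu
    obtain ⟨v, hv⟩ := Set.mem_iUnion.mp hu
    obtain ⟨h', rfl⟩ := hv
    rw [ContinuousLinearMap.adjoint_inner_right]
    simp only [ContinuousLinearMap.coe_comp', Function.comp_apply]
    rw [hMinvval, hDval, hVinner,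
      ← S9.adj_move T hTsa (Sw v (Tinv (J h'))) (Sw w (Tinv (J h))), hTψinner]
  have hE2 : (ContinuousLinearMap.adjoint (D ∘L Minv) ∘L (D ∘L Minv)) ∘L Mψ
      = T ∘L Mψ := by
    refine ContinuousLinearMap.ext_on hdenseV ?_
    rintro u hu
    obtain ⟨w, hw⟩ := Set.mem_iUnion.mp hu
    obtain ⟨h, rfl⟩ := hw
    simp only [ContinuousLinearMap.coe_comp', Function.comp_apply]
    rw [hMψval, hMinvval, hDval, hE1]
  have hTfact : T = ContinuousLinearMap.adjoint (D ∘L Minv) ∘L (D ∘L Minv) := by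
    ext x
    have h1 := ContinuousLinearMap.ext_iff.mp hE2 (Minv x)
    simp only [ContinuousLinearMap.coe_comp', Function.comp_apply] at h1 ⊢
    rw [hMψMinvpt x] at h1
    exact h1.symm
  -- Θ commutes with the word operators
  have hΘSw : ∀ w (x : F), D (Minv (Sw w x)) = Sw w (D (Minv x)) := by
    intro w
    induction w with
    | nil => intro x; rw [hSwnilpt, hSwnilpt]
    | cons i w ih =>
      intro x
      rw [hSw_cons]
      simp only [ContinuousLinearMap.coe_comp', Function.comp_apply]
      rw [hMinvSpt, hDSpt, ih]
  -- final density (outerness of Θ)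
  have hΘΘi : (D ∘L Minv) ∘L (Mψ ∘L D2) = 1 := by
    ext x
    simp only [ContinuousLinearMap.coe_comp', Function.comp_apply,
      ContinuousLinearMap.one_apply]
    rw [hMinvMψpt, hDD2pt]
  have hfinal : (Submodule.span ℂ (⋃ w : List (Fin n),
      Set.range fun h : E => Sw w (D (Minv (J h))))).topologicalClosure = ⊤ := by
    rw [Submodule.topologicalClosure_eq_top_iff, Submodule.eq_bot_iff]
    intro x hx
    have hg : ∀ (w : List (Fin n)) (h : E), ⟪Sw w (D (Minv (J h))), x⟫_ℂ = 0 := by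
      intro w h
      exact (Submodule.mem_orthogonal _ x).mp hx _
        (Submodule.subset_span (Set.mem_iUnion.mpr ⟨w, Set.mem_range_self h⟩))
    have h0 : ContinuousLinearMap.adjoint (D ∘L Minv) x = 0 := by
      refine S9.eq_zero_of_dense_span hJspan ?_
      intro u hu
      obtain ⟨w, hw⟩ := Set.mem_iUnion.mp hu
      obtain ⟨h, rfl⟩ := hw
      rw [ContinuousLinearMap.adjoint_inner_right]
      simp only [ContinuousLinearMap.coe_comp', Function.comp_apply]
      rw [hΘSw w (J h)]
      exact hg w h
    have h2 := congrArg ContinuousLinearMap.adjoint hΘΘi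
    rw [ContinuousLinearMap.adjoint_comp, S9.adjoint_one] at h2
    have h3 := ContinuousLinearMap.ext_iff.mp h2 x
    simp only [ContinuousLinearMap.coe_comp', Function.comp_apply,
      ContinuousLinearMap.one_apply] at h3
    rw [h0, map_zero] at h3
    exact h3.symm
  exact ⟨Mψ, Minv, D, N, Ninv, hMψcomm, hMψval, hMψMinv, hMinvMψ,
    (ContinuousLinearMap.nonneg_iff_isPositive N).mp hN0, hNN, hNNinv, hNinvN,
    hDcomm, hDval, hTfact, hfinal⟩
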